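/- Let R be a Prüfer domain. Every finitely generated projective R-module P is isomorphic, as an R-module, to a finite direct sum ⊕_{i=1}^r I_i where each I_i is a nonzero finitely generated (hence invertible) ideal of R. -/

import Mathlib

section Aux

variable {R : Type*} [CommRing R] [IsDomain R]

/-- Any element of a product of ideals is a finite sum of products. -/
lemma aux_exists_rep {I J : Ideal R} {x : R} (hx : x ∈ I * J) :
    ∃ (k : ℕ) (a b : Fin k → R), (∀ i, a i ∈ I) ∧ (∀ i, b i ∈ J) ∧ ∑ i, a i * b i = x := by
  refine Submodule.mul_induction_on hx ?_ ?_
  · intro a ha b hb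
    exact ⟨1, fun _ => a, fun _ => b, fun _ => ha, fun _ => hb, by simp⟩
  · rintro x y ⟨k₁, a₁, b₁, ha₁, hb₁, h₁⟩ ⟨k₂, a₂, b₂, ha₂, hb₂, h₂⟩
    refine ⟨k₁ + k₂, Fin.append a₁ a₂, Fin.append b₁ b₂, ?_, ?_, ?_⟩
    · intro i
      refine i.addCases (fun j => ?_) (fun j => ?_)
      · simpa [Fin.append_left] using ha₁ j
      · simpa [Fin.append_right] using ha₂ j
    · intro i
      refine i.addCases (fun j => ?_) (fun j => ?_)
      · simpa [Fin.append_left] using hb₁ j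
      · simpa [Fin.append_right] using hb₂ j
    · rw [Fin.sum_univ_add]
      simp [Fin.append_left, Fin.append_right, h₁, h₂]

/-- An invertible ideal is projective. -/
lemma aux_projective_of_invertible (I J : Ideal R) (c : R) (hc : c ≠ 0)
    (hIJ : I * J = Ideal.span {c}) : Module.Projective R I := by
  have hcmem : c ∈ I * J := by rw [hIJ]; exact Ideal.mem_span_singleton_self c
  obtain ⟨k, a, b, ha, hb, hab⟩ := aux_exists_rep hcmem
  -- for each i, the map x ↦ (b i * x)/c
  have key : ∀ (i : Fin k) (x : I), ∃ t : R, t * c = b i * (x : R) := by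
    intro i x
    have : b i * (x : R) ∈ Ideal.span {c} := by
      rw [← hIJ, mul_comm I J]
      exact Ideal.mul_mem_mul (hb i) x.2
    exact Ideal.mem_span_singleton'.mp this
  choose f hf using key
  have flin : ∀ i, ∀ (x y : I), f i (x + y) = f i x + f i y := by
    intro i x y
    apply mul_right_cancel₀ hc
    rw [hf, add_mul, hf, hf, Submodule.coe_add, mul_add]
  have fsmul : ∀ i, ∀ (r : R) (x : I), f i (r • x) = r * f i x := by
    intro i r x
    apply mul_right_cancel₀ hc
    rw [hf, mul_assoc, hf, Submodule.coe_smul, smul_eq_mul]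
    ring
  let φ : I →ₗ[R] (Fin k → R) :=
    { toFun := fun x i => f i x
      map_add' := fun x y => by funext i; exact flin i x y
      map_smul' := fun r x => by funext i; exact fsmul i r x }
  let ψ : (Fin k → R) →ₗ[R] I :=
    { toFun := fun v => ∑ i, v i • (⟨a i, ha i⟩ : I)
      map_add' := fun v w => by
        rw [← Finset.sum_add_distrib]
        exact Finset.sum_congr rfl fun i _ => by rw [Pi.add_apply, add_smul]
      map_smul' := fun r v => by
        simp only [RingHom.id_apply]
        rw [Finset.smul_sum]
        exact Finset.sum_congr rfl fun i _ => by rw [Pi.smul_apply, smul_eq_mul, smul_smul] }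
  refine Module.Projective.of_split φ ψ ?_
  ext x
  have h1 : (↑(ψ (φ x)) : R) = ∑ i, f i x * a i := by
    simp [ψ, φ]
  have h2 : c * ∑ i, f i x * a i = c * (x : R) := by
    rw [Finset.mul_sum]
    have hterm : ∀ i ∈ Finset.univ, c * (f i x * a i) = (x : R) * (a i * b i) := by
      intro i _
      linear_combination (a i) * hf i x
    rw [Finset.sum_congr rfl hterm, ← Finset.mul_sum, hab]
    ring
  rw [← h1] at h2
  simpa using mul_left_cancel₀ hc h2

/-- A split surjection gives a direct-sum decomposition. -/
noncomputable def aux_splitEquiv {M N : Type*} [AddCommGroup M] [Module R M]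
    [AddCommGroup N] [Module R N] (g : M →ₗ[R] N) (s : N →ₗ[R] M)
    (h : g.comp s = LinearMap.id) :
    M ≃ₗ[R] (N × LinearMap.ker g) := by
  have hgs : ∀ x, g (s x) = x := fun x => congrArg (fun f => f x) (congrArg DFunLike.coe h)
  have hinj : Function.Injective s := by
    intro x y hxy
    have := congrArg g hxy
    rwa [hgs, hgs] at this
  have hcompl : IsCompl (LinearMap.range s) (LinearMap.ker g) := by
    constructor
    · rw [disjoint_iff]
      ext x
      simp only [Submodule.mem_inf, LinearMap.mem_range, LinearMap.mem_ker,
        Submodule.mem_bot]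
      constructor
      · rintro ⟨⟨y, rfl⟩, hk⟩
        rw [hgs] at hk
        simp [hk]
      · rintro rfl; exact ⟨⟨0, by simp⟩, by simp⟩
    · rw [codisjoint_iff]
      ext x
      simp only [Submodule.mem_top, iff_true, Submodule.mem_sup]
      exact ⟨s (g x), ⟨g x, rfl⟩, x - s (g x), by simp [hgs], by abel⟩
  exact (Submodule.prodEquivOfIsCompl _ _ hcompl).symm ≪≫ₗ
    LinearEquiv.prodCongr (LinearEquiv.ofInjective s hinj).symm (LinearEquiv.refl R _)

/-- Main induction: every f.g. submodule of `R^n` is a direct sum of nonzero f.g. ideals. -/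
lemma aux_main
    (hpruf : ∀ I : Ideal R, I.FG → I ≠ ⊥ →
      ∃ (J : Ideal R) (c : R), J.FG ∧ c ≠ 0 ∧ I * J = Ideal.span {c}) :
    ∀ (n : ℕ) (M : Submodule R (Fin n → R)), M.FG →
      ∃ (ι : Type) (_ : Fintype ι) (I : ι → Ideal R),
        (∀ i, (I i).FG ∧ I i ≠ ⊥) ∧ Nonempty (M ≃ₗ[R] ((i : ι) → I i)) := by
  intro n
  induction n with
  | zero =>
    intro M _
    refine ⟨Empty, inferInstance, fun i => i.elim, fun i => i.elim, ⟨?_⟩⟩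
    have : Subsingleton M := by
      constructor; intro a b
      ext i
      exact i.elim0
    exact LinearEquiv.ofSubsingleton _ _
  | succ n ih =>
    intro M hM
    haveI : Module.Finite R M := Module.Finite.iff_fg.mpr hM
    set π : (Fin (n + 1) → R) →ₗ[R] R := LinearMap.proj (Fin.last n) with hπ
    set π' : M →ₗ[R] R := π.comp M.subtype with hπ'
    set g : (Fin (n + 1) → R) →ₗ[R] (Fin n → R) := LinearMap.funLeft R R Fin.castSucc with hg
    by_cases hI : LinearMap.range π' = ⊥
    · -- all last coordinates are zero; M embeds into R^n
      have hlast : ∀ x : M, (x : Fin (n + 1) → R) (Fin.last n) = 0 := by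
        intro x
        have : π' x ∈ (⊥ : Ideal R) := hI ▸ LinearMap.mem_range_self π' x
        simpa [π', π] using this
      set gM : M →ₗ[R] (Fin n → R) := g.comp M.subtype with hgM
      have hinj : Function.Injective gM := by
        intro x y hxy
        ext i
        refine Fin.lastCases ?_ (fun j => ?_) i
        · rw [hlast x, hlast y]
        · exact congrArg (fun v => v j) hxy
      have hrangeFG : (LinearMap.range gM).FG := by
        rw [← Submodule.map_top]
        exact Submodule.FG.map _ ((Submodule.fg_top _).mpr hM)
      obtain ⟨ι, hft, I, hIprop, ⟨e⟩⟩ := ih (LinearMap.range gM) hrangeFG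
      exact ⟨ι, hft, I, hIprop, ⟨(LinearEquiv.ofInjective gM hinj).trans e⟩⟩
    · -- the image ideal is nonzero, split it off
      have hIfg : (LinearMap.range π').FG := by
        rw [← Submodule.map_top]
        exact Submodule.FG.map _ ((Submodule.fg_top _).mpr hM)
      obtain ⟨J, c, _, hc, hIJ⟩ := hpruf _ hIfg hI
      haveI : Module.Projective R (LinearMap.range π') :=
        aux_projective_of_invertible _ J c hc hIJ
      set π'' : M →ₗ[R] LinearMap.range π' := π'.rangeRestrict with hπ''
      have hsurj : Function.Surjective π'' := LinearMap.surjective_rangeRestrict π'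
      obtain ⟨s, hs⟩ := Module.projective_lifting_property π'' LinearMap.id hsurj
      let e₁ : M ≃ₗ[R] (LinearMap.range π' × LinearMap.ker π'') := aux_splitEquiv π'' s hs
      -- the kernel embeds into R^n
      set K := LinearMap.ker π'' with hK
      haveI : Module.Finite R K :=
        Module.Finite.of_surjective ((LinearMap.snd R _ _).comp e₁.toLinearMap)
          ((Prod.snd_surjective).comp e₁.surjective)
      set gK : K →ₗ[R] (Fin n → R) := g.comp (M.subtype.comp K.subtype) with hgK
      have hKlast : ∀ x : K, ((x : M) : Fin (n + 1) → R) (Fin.last n) = 0 := by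
        intro x
        have h0 : π'' (x : M) = 0 := x.2
        exact congrArg Subtype.val h0
      have hinj : Function.Injective gK := by
        intro x y hxy
        ext i
        refine Fin.lastCases ?_ (fun j => ?_) i
        · rw [hKlast x, hKlast y]
        · exact congrArg (fun v => v j) hxy
      have hrangeFG : (LinearMap.range gK).FG := by
        rw [← Submodule.map_top]
        exact Submodule.FG.map _ (Module.finite_def.mp ‹Module.Finite R K›)
      obtain ⟨ι, hft, I, hIprop, ⟨e₂⟩⟩ := ih (LinearMap.range gK) hrangeFG
      refine ⟨Option ι, inferInstance, fun o => o.elim (LinearMap.range π') I, ?_, ⟨?_⟩⟩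
      · rintro (_ | i)
        · exact ⟨hIfg, hI⟩
        · exact hIprop i
      · letI e₃ : (LinearMap.range π' × K) ≃ₗ[R]
            (LinearMap.range π' × ((i : ι) → I i)) :=
          LinearEquiv.prodCongr (LinearEquiv.refl R _)
            ((LinearEquiv.ofInjective gK hinj).trans e₂)
        letI e₄ : ((o : Option ι) → ↥(o.elim (LinearMap.range π') I)) ≃ₗ[R]
            (LinearMap.range π' × ((i : ι) → I i)) :=
          LinearEquiv.piOptionEquivProd R
        exact e₁.trans (e₃.trans e₄.symm)

end Aux

/-- Over a Prüfer domain, every finitely generated projective module is isomorphic to a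
finite direct sum of nonzero finitely generated ideals. -/
theorem stmt_6 {R : Type*} [CommRing R] [IsDomain R]
    (hpruf : ∀ I : Ideal R, I.FG → I ≠ ⊥ →
      ∃ (J : Ideal R) (c : R), J.FG ∧ c ≠ 0 ∧ I * J = Ideal.span {c})
    (P : Type*) [AddCommGroup P] [Module R P]
    [Module.Finite R P] [Module.Projective R P] :
    ∃ (r : ℕ) (I : Fin r → Ideal R),
      (∀ i, (I i).FG ∧ I i ≠ ⊥) ∧
      Nonempty (P ≃ₗ[R] ((i : Fin r) → ↥(I i))) := by
  -- P is a retract of a finite free module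
  obtain ⟨n, f, hf⟩ := Module.Finite.exists_fin' R P
  obtain ⟨s, hs⟩ := Module.projective_lifting_property f LinearMap.id hf
  have hsinj : Function.Injective s := by
    intro x y hxy
    have := congrArg f hxy
    have hfs : ∀ x, f (s x) = x := fun x => congrArg (fun g => g x) (congrArg DFunLike.coe hs)
    rwa [hfs, hfs] at this
  have hrangeFG : (LinearMap.range s).FG := by
    rw [← Submodule.map_top]
    exact Submodule.FG.map _ (Module.finite_def.mp ‹Module.Finite R P›)
  obtain ⟨ι, hft, I, hIprop, ⟨e⟩⟩ := aux_main hpruf n (LinearMap.range s) hrangeFG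
  haveI := hft
  refine ⟨Fintype.card ι, I ∘ (Fintype.equivFin ι).symm, fun i => hIprop _, ⟨?_⟩⟩
  have e' : ((i : ι) → ↥(I i)) ≃ₗ[R]
      ((i : Fin (Fintype.card ι)) → ↥(I ((Fintype.equivFin ι).symm i))) :=
    (LinearEquiv.piCongrLeft R (fun i => ↥(I i)) (Fintype.equivFin ι).symm).symm
  exact ((LinearEquiv.ofInjective s hsinj).trans e).trans e'
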